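/- Let c_1,…,c_K > 0 and ε > 0. The set D = { τ ∈ ℝ^K : ∑_{k=1}^K τ_k² < ε } is convex, and the function f(τ) = (∑_{k=1}^K c_k (1 − τ_k)²) / (ε − ∑_{k=1}^K τ_k²) is convex on D. -/

import Mathlib

/-- Key quadratic-over-linear inequality (Cauchy–Schwarz). -/
lemma aircomp_key (A B x y a b : ℝ) (hA : 0 < A) (hB : 0 < B)
    (ha : 0 ≤ a) (hb : 0 ≤ b) (hD : 0 < a * A + b * B) :
    (a * x + b * y) ^ 2 / (a * A + b * B) ≤ a * (x ^ 2 / A) + b * (y ^ 2 / B) := by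
  rw [div_le_iff₀ hD]
  have h2 : a * (x ^ 2 / A) + b * (y ^ 2 / B)
      = (a * (x ^ 2 * B) + b * (y ^ 2 * A)) / (A * B) := by
    field_simp
  rw [h2, div_mul_eq_mul_div, le_div_iff₀ (by positivity)]
  nlinarith [mul_nonneg (mul_nonneg ha hb) (sq_nonneg (B * x - A * y))]

lemma aircomp_sq_convex (x y a b : ℝ) (ha : 0 ≤ a) (hb : 0 ≤ b) (hab : a + b = 1) :
    (a * x + b * y) ^ 2 ≤ a * x ^ 2 + b * y ^ 2 := by
  nlinarith [mul_nonneg (mul_nonneg ha hb) (sq_nonneg (x - y))]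

/-- The set `D = {τ ∈ ℝ^K : ∑ k (τ k)² < ε}` is convex, and the function
`f τ = (∑ k c k (1 − τ k)²)/(ε − ∑ k (τ k)²)` is convex on `D`. -/
theorem aircomp_transformed_objective_convex (K : ℕ) (c : Fin K → ℝ)
    (hc : ∀ k, 0 < c k) (ε : ℝ) (hε : 0 < ε) :
    Convex ℝ {τ : Fin K → ℝ | (∑ k, τ k ^ 2) < ε}
    ∧ ConvexOn ℝ {τ : Fin K → ℝ | (∑ k, τ k ^ 2) < ε}
        (fun τ : Fin K → ℝ =>
          (∑ k, c k * (1 - τ k) ^ 2) / (ε - ∑ k, τ k ^ 2)) := by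
  have hset : Convex ℝ {τ : Fin K → ℝ | (∑ k, τ k ^ 2) < ε} := by
    intro τ hτ σ hσ a b ha hb hab
    simp only [Set.mem_setOf_eq] at hτ hσ ⊢
    have h1 : ∑ k, ((a • τ + b • σ) k) ^ 2 ≤ a * ∑ k, τ k ^ 2 + b * ∑ k, σ k ^ 2 := by
      rw [Finset.mul_sum, Finset.mul_sum, ← Finset.sum_add_distrib]
      refine Finset.sum_le_sum fun k _ => ?_
      simpa using aircomp_sq_convex (τ k) (σ k) a b ha hb hab
    rcases ha.eq_or_lt with h | h
    · have hb1 : b = 1 := by linarith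
      calc ∑ k, ((a • τ + b • σ) k) ^ 2 ≤ a * ∑ k, τ k ^ 2 + b * ∑ k, σ k ^ 2 := h1
        _ < ε := by rw [← h, hb1]; simpa using hσ
    · calc ∑ k, ((a • τ + b • σ) k) ^ 2 ≤ a * ∑ k, τ k ^ 2 + b * ∑ k, σ k ^ 2 := h1
        _ < ε := by nlinarith [mul_nonneg hb (sub_nonneg.2 hσ.le)]
  refine ⟨hset, hset, ?_⟩
  intro τ hτ σ hσ a b ha hb hab
  simp only [Set.mem_setOf_eq] at hτ hσ
  set A : ℝ := ε - ∑ k, τ k ^ 2 with hAdef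
  set B : ℝ := ε - ∑ k, σ k ^ 2 with hBdef
  have hA : 0 < A := sub_pos.2 hτ
  have hB : 0 < B := sub_pos.2 hσ
  have hD : 0 < a * A + b * B := by
    rcases ha.eq_or_lt with h | h
    · have hb1 : b = 1 := by linarith
      rw [← h, hb1]; simpa using hB
    · nlinarith [mul_nonneg hb hB.le]
  have hmixsum : ∑ k, ((a • τ + b • σ) k) ^ 2 ≤ a * ∑ k, τ k ^ 2 + b * ∑ k, σ k ^ 2 := by
    rw [Finset.mul_sum, Finset.mul_sum, ← Finset.sum_add_distrib]
    refine Finset.sum_le_sum fun k _ => ?_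
    simpa using aircomp_sq_convex (τ k) (σ k) a b ha hb hab
  have hDm : a * A + b * B ≤ ε - ∑ k, ((a • τ + b • σ) k) ^ 2 := by
    have : a * A + b * B = ε - (a * ∑ k, τ k ^ 2 + b * ∑ k, σ k ^ 2) := by
      rw [hAdef, hBdef]; ring_nf; nlinarith [hab]
    linarith
  have hDmpos : 0 < ε - ∑ k, ((a • τ + b • σ) k) ^ 2 := lt_of_lt_of_le hD hDm
  have hN : 0 ≤ ∑ k, c k * (1 - (a • τ + b • σ) k) ^ 2 :=
    Finset.sum_nonneg fun k _ => mul_nonneg (hc k).le (sq_nonneg _)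
  have step1 : (∑ k, c k * (1 - (a • τ + b • σ) k) ^ 2) / (ε - ∑ k, ((a • τ + b • σ) k) ^ 2)
      ≤ (∑ k, c k * (1 - (a • τ + b • σ) k) ^ 2) / (a * A + b * B) :=
    div_le_div_of_nonneg_left hN hD hDm
  have step2 : (∑ k, c k * (1 - (a • τ + b • σ) k) ^ 2) / (a * A + b * B)
      ≤ a * ((∑ k, c k * (1 - τ k) ^ 2) / A) + b * ((∑ k, c k * (1 - σ k) ^ 2) / B) := by
    rw [Finset.sum_div]
    have hterm : ∀ k ∈ Finset.univ, (c k * (1 - (a • τ + b • σ) k) ^ 2) / (a * A + b * B)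
        ≤ a * ((c k * (1 - τ k) ^ 2) / A) + b * ((c k * (1 - σ k) ^ 2) / B) := by
      intro k _
      have hmk : 1 - (a • τ + b • σ) k = a * (1 - τ k) + b * (1 - σ k) := by
        simp [smul_eq_mul]; nlinarith [hab]
      rw [hmk]
      have := aircomp_key A B (1 - τ k) (1 - σ k) a b hA hB ha hb hD
      calc (c k * (a * (1 - τ k) + b * (1 - σ k)) ^ 2) / (a * A + b * B)
          = c k * ((a * (1 - τ k) + b * (1 - σ k)) ^ 2 / (a * A + b * B)) := by ring
        _ ≤ c k * (a * ((1 - τ k) ^ 2 / A) + b * ((1 - σ k) ^ 2 / B)) :=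
            mul_le_mul_of_nonneg_left this (hc k).le
        _ = a * ((c k * (1 - τ k) ^ 2) / A) + b * ((c k * (1 - σ k) ^ 2) / B) := by ring
    calc ∑ k, (c k * (1 - (a • τ + b • σ) k) ^ 2) / (a * A + b * B)
        ≤ ∑ k, (a * ((c k * (1 - τ k) ^ 2) / A) + b * ((c k * (1 - σ k) ^ 2) / B)) :=
          Finset.sum_le_sum hterm
      _ = a * ((∑ k, c k * (1 - τ k) ^ 2) / A) + b * ((∑ k, c k * (1 - σ k) ^ 2) / B) := by
          rw [Finset.sum_add_distrib, Finset.sum_div, Finset.sum_div, Finset.mul_sum,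
            Finset.mul_sum]
  simp only [smul_eq_mul]
  calc (∑ k, c k * (1 - (a • τ + b • σ) k) ^ 2) / (ε - ∑ k, ((a • τ + b • σ) k) ^ 2)
      ≤ (∑ k, c k * (1 - (a • τ + b • σ) k) ^ 2) / (a * A + b * B) := step1
    _ ≤ a * ((∑ k, c k * (1 - τ k) ^ 2) / A) + b * ((∑ k, c k * (1 - σ k) ^ 2) / B) := step2
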